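/- Let H be a real Hilbert space and C a nonempty closed convex subset of H. Let T_1,…,T_N : C → C be closed quasi-nonexpansive mappings with F = ⋂_{i=1}^N F(T_i) ≠ ∅. Let {α_n} ⊂ [0,1] with α_n → 0. Let {x_n} be generated by: x_0 ∈ C, C_0 = C; y_n^i = α_n x_n + (1 − α_n) T_i x_n for i = 1,…,N; choose i_n ∈ {1,…,N} with ‖y_n^{i_n} − x_n‖ = max_{1≤i≤N} ‖y_n^i − x_n‖ and set ȳ_n = y_n^{i_n}; C_{n+1} = {v ∈ C_n : ‖v − ȳ_n‖ ≤ ‖v − x_n‖}; and x_{n+1} is the metric projection of x_0 onto C_{n+1}. Then {x_n} converges strongly to the metric projection of x_0 onto F. -/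

import Mathlib

open Filter Topology

lemma halfspace_closed_convex' {H : Type*} [NormedAddCommGroup H] [InnerProductSpace ℝ H]
    (a b : H) : IsClosed {v : H | ‖v - a‖ ≤ ‖v - b‖} ∧ Convex ℝ {v : H | ‖v - a‖ ≤ ‖v - b‖} := by
  constructor
  · exact isClosed_le (by continuity) (by continuity)
  · have hset : {v : H | ‖v - a‖ ≤ ‖v - b‖}
        = {v : H | (inner ℝ (b - a) v : ℝ) * 2 ≤ ‖b‖ ^ 2 - ‖a‖ ^ 2} := by
      ext v
      simp only [Set.mem_setOf_eq]
      constructor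
      · intro h
        have h2 : ‖v - a‖ ^ 2 ≤ ‖v - b‖ ^ 2 := by
          nlinarith [norm_nonneg (v - a), norm_nonneg (v - b)]
        rw [norm_sub_sq_real, norm_sub_sq_real] at h2
        rw [inner_sub_left]
        have ha := real_inner_comm a v
        have hb := real_inner_comm b v
        linarith
      · intro h
        have h2 : ‖v - a‖ ^ 2 ≤ ‖v - b‖ ^ 2 := by
          rw [norm_sub_sq_real, norm_sub_sq_real]
          rw [inner_sub_left] at h
          have ha := real_inner_comm a v
          have hb := real_inner_comm b v
          linarith
        nlinarith [norm_nonneg (v - a), norm_nonneg (v - b)]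
    rw [hset]
    exact convex_halfSpace_le
      ⟨fun u w => by simp [inner_add_right, add_mul],
       fun c u => by simp [real_inner_smul_right]; ring⟩ _

/-- Parallel hybrid method for a finite family of closed quasi-nonexpansive mappings
in a real Hilbert space (Theorem 3.6, Hilbert-space form). -/
theorem stmt_3
    {H : Type*} [NormedAddCommGroup H] [InnerProductSpace ℝ H] [CompleteSpace H]
    (C : Set H) (hCne : C.Nonempty) (hCcl : IsClosed C) (hCcv : Convex ℝ C)
    (N : ℕ) (hN : 0 < N) (T : Fin N → H → H) (hTmaps : ∀ i, Set.MapsTo (T i) C C)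
    (hQN : ∀ i, ∀ p ∈ C, T i p = p → ∀ x ∈ C, ‖p - T i x‖ ≤ ‖p - x‖)
    (hTclosed : ∀ i, ∀ (u : ℕ → H) (p q : H), (∀ n, u n ∈ C) → p ∈ C →
      Tendsto u atTop (𝓝 p) → Tendsto (fun n => T i (u n)) atTop (𝓝 q) → T i p = q)
    (F : Set H) (hF : F = ⋂ i, {x ∈ C | T i x = x}) (hFne : F.Nonempty)
    (α : ℕ → ℝ) (hα : ∀ n, α n ∈ Set.Icc (0 : ℝ) 1) (hαlim : Tendsto α atTop (𝓝 0))
    (x : ℕ → H) (y : ℕ → Fin N → H) (i_ : ℕ → Fin N) (CS : ℕ → Set H)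
    (hx0 : x 0 ∈ C) (hCS0 : CS 0 = C)
    (hy : ∀ n i, y n i = α n • x n + (1 - α n) • T i (x n))
    (hmax : ∀ n i, ‖y n i - x n‖ ≤ ‖y n (i_ n) - x n‖)
    (hCS : ∀ n, CS (n + 1) = {v ∈ CS n | ‖v - y n (i_ n)‖ ≤ ‖v - x n‖})
    (hproj : ∀ n, x (n + 1) ∈ CS (n + 1) ∧
      ∀ v ∈ CS (n + 1), ‖x (n + 1) - x 0‖ ≤ ‖v - x 0‖) :
    ∃ z ∈ F, (∀ v ∈ F, ‖z - x 0‖ ≤ ‖v - x 0‖) ∧ Tendsto x atTop (𝓝 z) := by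
  -- CS is an antitone sequence of sets
  have hCSanti : ∀ n, CS (n + 1) ⊆ CS n := by
    intro n v hv; rw [hCS n] at hv; exact hv.1
  have hCSle : ∀ n m : ℕ, n ≤ m → CS m ⊆ CS n := by
    intro n m h
    induction h with
    | refl => exact subset_rfl
    | step _ ih => exact (hCSanti _).trans ih
  have hxC : ∀ n, x n ∈ C := by
    intro n
    cases n with
    | zero => exact hx0
    | succ n =>
      have := (hproj n).1
      rw [← hCS0]
      exact hCSle 0 (n + 1) (Nat.zero_le _) this
  -- CS n is closed and convex
  have hCSprop : ∀ n, IsClosed (CS n) ∧ Convex ℝ (CS n) := by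
    intro n
    induction n with
    | zero => rw [hCS0]; exact ⟨hCcl, hCcv⟩
    | succ n ih =>
      rw [hCS n]
      have h := halfspace_closed_convex' (y n (i_ n)) (x n)
      exact ⟨ih.1.inter h.1, ih.2.inter h.2⟩
  -- F ⊆ CS n for all n
  have hFC : ∀ p ∈ F, p ∈ C ∧ ∀ i, T i p = p := by
    intro p hp
    rw [hF] at hp
    have h := Set.mem_iInter.mp hp
    exact ⟨(h ⟨0, hN⟩).1, fun i => (h i).2⟩
  have hFCS : ∀ n, F ⊆ CS n := by
    intro n
    induction n with
    | zero => rw [hCS0]; intro p hp; exact (hFC p hp).1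
    | succ n ih =>
      intro p hp
      rw [hCS n]
      refine ⟨ih hp, ?_⟩
      obtain ⟨hpC, hpfix⟩ := hFC p hp
      -- p - y n i = α n • (p - x n) + (1 - α n) • (p - T i (x n))
      have hdecomp : p - y n (i_ n)
          = α n • (p - x n) + (1 - α n) • (p - T (i_ n) (x n)) := by
        rw [hy]; module
      have hαn := hα n
      obtain ⟨hα0, hα1⟩ := hαn
      have hq := hQN (i_ n) p hpC (hpfix (i_ n)) (x n) (hxC n)
      calc ‖p - y n (i_ n)‖
          ≤ ‖α n • (p - x n)‖ + ‖(1 - α n) • (p - T (i_ n) (x n))‖ := by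
            rw [hdecomp]; exact norm_add_le _ _
        _ = α n * ‖p - x n‖ + (1 - α n) * ‖p - T (i_ n) (x n)‖ := by
            rw [norm_smul, norm_smul, Real.norm_of_nonneg hα0,
              Real.norm_of_nonneg (by linarith)]
        _ ≤ α n * ‖p - x n‖ + (1 - α n) * ‖p - x n‖ := by
            have : (0:ℝ) ≤ 1 - α n := by linarith
            nlinarith
        _ = ‖p - x n‖ := by ring
  obtain ⟨p₀, hp₀⟩ := hFne
  -- the distance sequence
  set d : ℕ → ℝ := fun n => ‖x (n + 1) - x 0‖ with hd
  have hdmono : Monotone d := by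
    apply monotone_nat_of_le_succ
    intro n
    exact (hproj n).2 (x (n + 2)) (hCSanti (n + 1) (hproj (n + 1)).1)
  have hdbdd : ∀ n, d n ≤ ‖p₀ - x 0‖ := fun n =>
    (hproj n).2 p₀ (hFCS (n + 1) hp₀)
  -- key geometric inequality via the parallelogram law
  have hkey : ∀ n m : ℕ, n ≤ m →
      ‖x (m + 1) - x (n + 1)‖ ^ 2 ≤ 2 * (d m ^ 2 - d n ^ 2) := by
    intro n m hnm
    set p := x (n + 1)
    set w := x (m + 1)
    have hwK : w ∈ CS (n + 1) := hCSle (n + 1) (m + 1) (by omega) (hproj m).1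
    have hpK : p ∈ CS (n + 1) := (hproj n).1
    have hmid : (1/2 : ℝ) • p + (1/2 : ℝ) • w ∈ CS (n + 1) :=
      (hCSprop (n + 1)).2 hpK hwK (by norm_num) (by norm_num) (by norm_num)
    have hmin : ‖p - x 0‖ ≤ ‖(1/2 : ℝ) • p + (1/2 : ℝ) • w - x 0‖ :=
      (hproj n).2 _ hmid
    have hpar := parallelogram_law_with_norm ℝ (p - x 0) (w - x 0)
    have hsum : p - x 0 + (w - x 0) = (2 : ℝ) • ((1/2 : ℝ) • p + (1/2 : ℝ) • w - x 0) := by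
      module
    have hsumnorm : ‖p - x 0 + (w - x 0)‖ = 2 * ‖(1/2 : ℝ) • p + (1/2 : ℝ) • w - x 0‖ := by
      rw [hsum, norm_smul]; norm_num
    have hdiff : p - x 0 - (w - x 0) = p - w := by abel
    rw [hsumnorm, hdiff] at hpar
    have h1 : ‖w - p‖ = ‖p - w‖ := norm_sub_rev _ _
    have h2 : d n = ‖p - x 0‖ := rfl
    have h3 : d m = ‖w - x 0‖ := rfl
    rw [h1, h2, h3]
    nlinarith [norm_nonneg (p - w), norm_nonneg ((1/2 : ℝ) • p + (1/2 : ℝ) • w - x 0),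
      norm_nonneg (p - x 0), hmin]
  -- d^2 converges
  have hd0 : ∀ n, 0 ≤ d n := fun n => norm_nonneg _
  have hdsqmono : Monotone (fun n => d n ^ 2) := fun n m h =>
    pow_le_pow_left₀ (hd0 n) (hdmono h) 2
  have hdsqbdd : BddAbove (Set.range fun n => d n ^ 2) := by
    refine ⟨‖p₀ - x 0‖ ^ 2, ?_⟩
    rintro _ ⟨n, rfl⟩
    exact pow_le_pow_left₀ (hd0 n) (hdbdd n) 2
  set L : ℝ := ⨆ n, d n ^ 2 with hL
  have hdsqtendsto : Tendsto (fun n => d n ^ 2) atTop (𝓝 L) :=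
    tendsto_atTop_ciSup hdsqmono hdsqbdd
  have hdsqle : ∀ n, d n ^ 2 ≤ L := fun n => le_ciSup hdsqbdd n
  -- Cauchy
  have hcauchy : CauchySeq (fun n => x (n + 1)) := by
    apply cauchySeq_of_le_tendsto_0 (fun n => Real.sqrt (2 * (L - d n ^ 2)))
    · intro n m K hn hm
      rcases le_total n m with h | h
      · have hkey' := hkey n m h
        have hKn : d K ^ 2 ≤ d n ^ 2 := hdsqmono hn
        have hmL : d m ^ 2 ≤ L := hdsqle m
        rw [dist_comm, dist_eq_norm]
        have h2 : ‖x (m + 1) - x (n + 1)‖ ^ 2 ≤ 2 * (L - d K ^ 2) := by linarith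
        calc ‖x (m + 1) - x (n + 1)‖
            = Real.sqrt (‖x (m + 1) - x (n + 1)‖ ^ 2) := (Real.sqrt_sq (norm_nonneg _)).symm
          _ ≤ Real.sqrt (2 * (L - d K ^ 2)) := Real.sqrt_le_sqrt h2
      · have hkey' := hkey m n h
        have hKn : d K ^ 2 ≤ d m ^ 2 := hdsqmono hm
        have hmL : d n ^ 2 ≤ L := hdsqle n
        rw [dist_eq_norm]
        have h2 : ‖x (n + 1) - x (m + 1)‖ ^ 2 ≤ 2 * (L - d K ^ 2) := by linarith
        calc ‖x (n + 1) - x (m + 1)‖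
            = Real.sqrt (‖x (n + 1) - x (m + 1)‖ ^ 2) := (Real.sqrt_sq (norm_nonneg _)).symm
          _ ≤ Real.sqrt (2 * (L - d K ^ 2)) := Real.sqrt_le_sqrt h2
    · have : Tendsto (fun n => 2 * (L - d n ^ 2)) atTop (𝓝 (2 * (L - L))) :=
        (tendsto_const_nhds.sub hdsqtendsto).const_mul 2
      simp only [sub_self, mul_zero] at this
      have := this.sqrt
      simpa using this
  obtain ⟨z, hz⟩ := cauchySeq_tendsto_of_complete hcauchy
  have hxz : Tendsto x atTop (𝓝 z) := by
    rwa [← tendsto_add_atTop_iff_nat 1]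
  -- z belongs to every CS n
  have hzCS : ∀ n, z ∈ CS n := by
    intro n
    refine (hCSprop n).1.mem_of_tendsto hz ?_
    filter_upwards [eventually_ge_atTop n] with m hm
    exact hCSle n (m + 1) (by omega) (hproj m).1
  have hzC : z ∈ C := by rw [← hCS0]; exact hzCS 0
  -- ‖x (n+1) - x n‖ → 0
  have hdiff0 : Tendsto (fun n => x (n + 1) - x n) atTop (𝓝 0) := by
    have := hz.sub hxz
    simpa using this
  have hndiff0 : Tendsto (fun n => ‖x (n + 1) - x n‖) atTop (𝓝 0) := by
    simpa using hdiff0.norm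
  -- ‖y n (i_ n) - x n‖ ≤ 2 ‖x (n+1) - x n‖
  have hybound : ∀ n, ‖y n (i_ n) - x n‖ ≤ 2 * ‖x (n + 1) - x n‖ := by
    intro n
    have hmem := (hproj n).1
    rw [hCS n] at hmem
    have h1 : ‖x (n + 1) - y n (i_ n)‖ ≤ ‖x (n + 1) - x n‖ := hmem.2
    calc ‖y n (i_ n) - x n‖
        = ‖(x (n + 1) - x n) - (x (n + 1) - y n (i_ n))‖ := by
          congr 1; abel
      _ ≤ ‖x (n + 1) - x n‖ + ‖x (n + 1) - y n (i_ n)‖ := norm_sub_le _ _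
      _ ≤ 2 * ‖x (n + 1) - x n‖ := by linarith
  -- for each i, T i (x n) - x n → 0, hence T i (x n) → z
  have hfix : ∀ i, T i z = z := by
    intro i
    have hTx0 : Tendsto (fun n => ‖T i (x n) - x n‖) atTop (𝓝 0) := by
      have hev : ∀ᶠ n in atTop, α n ≤ 1/2 := by
        have := hαlim.eventually (gt_mem_nhds (by norm_num : (0:ℝ) < 1/2))
        filter_upwards [this] with n hn using le_of_lt hn
      apply squeeze_zero' (Eventually.of_forall fun n => norm_nonneg _)
        (g := fun n => 4 * ‖x (n + 1) - x n‖)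
      · filter_upwards [hev] with n hn
        have hrel : y n i - x n = (1 - α n) • (T i (x n) - x n) := by
          rw [hy]; module
        have hnorm : ‖y n i - x n‖ = (1 - α n) * ‖T i (x n) - x n‖ := by
          rw [hrel, norm_smul, Real.norm_of_nonneg (by linarith [(hα n).2])]
        have h1 : ‖y n i - x n‖ ≤ 2 * ‖x (n + 1) - x n‖ :=
          (hmax n i).trans (hybound n)
        have h2 : (1/2 : ℝ) ≤ 1 - α n := by linarith
        nlinarith [norm_nonneg (T i (x n) - x n), norm_nonneg (x (n + 1) - x n)]
      · have := hndiff0.const_mul (4 : ℝ)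
        simpa using this
    have hTxz : Tendsto (fun n => T i (x n)) atTop (𝓝 z) := by
      have h1 : Tendsto (fun n => T i (x n) - x n) atTop (𝓝 0) :=
        tendsto_zero_iff_norm_tendsto_zero.mpr hTx0
      have := h1.add hxz
      simpa using this
    exact hTclosed i x z z hxC hzC hxz hTxz
  have hzF : z ∈ F := by
    rw [hF]
    exact Set.mem_iInter.mpr fun i => ⟨hzC, hfix i⟩
  refine ⟨z, hzF, ?_, hxz⟩
  intro v hv
  have hle : ∀ n, ‖x (n + 1) - x 0‖ ≤ ‖v - x 0‖ := fun n =>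
    (hproj n).2 v (hFCS (n + 1) hv)
  have htend : Tendsto (fun n => ‖x (n + 1) - x 0‖) atTop (𝓝 ‖z - x 0‖) :=
    (hz.sub tendsto_const_nhds).norm
  exact le_of_tendsto htend (Eventually.of_forall hle)
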